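/- Suppose Assumptions TI and CONT hold, but instead of strict monotonicity assume only that μ₀₀ and μ₁₀ are nondecreasing on ℝ (weak monotonicity, allowing discrete outcomes). With the conventions inf ∅ := +∞ and F_{X|A}(+∞) := 1, the following upper bound holds for every y ∈ ℝ: F_{Y₁(0)|G=1,R=1}(y) ≤ F_{Y₀|G=1,R=1}(F_{Y₀|G=0,R=1}^{-1}(F_{Y₁|G=0,R=1}(y))). (Upper-bound half of Remark 2 for the counterfactual untreated outcome of treatment respondents.) -/

import Mathlib

open MeasureTheory ProbabilityTheory

/-- Conditional CDF of `X` given the event `A`: `F_{X|A}(y) = P(X ≤ y | A)`. -/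
noncomputable def cCDF {Ω : Type*} [MeasurableSpace Ω] (P : Measure Ω) (A : Set Ω)
    (X : Ω → ℝ) (y : ℝ) : ℝ :=
  ((P[|A]) {ω | X ω ≤ y}).toReal

/-- Generalized inverse `F⁻¹(q) = inf {y ∈ ℝ : F(y) ≥ q}`. -/
noncomputable def ginv (F : ℝ → ℝ) (q : ℝ) : ℝ :=
  sInf {y : ℝ | q ≤ F y}

/-- Conditional expectation of `X` given the event `A`: `E[X·1_A]/P(A)`. -/
noncomputable def cExp {Ω : Type*} [MeasurableSpace Ω] (P : Measure Ω) (A : Set Ω)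
    (X : Ω → ℝ) : ℝ :=
  (∫ ω in A, X ω ∂P) / (P A).toReal

/-- Conditional probability of `B` given `A`: `P(B|A) = P(B ∩ A)/P(A)`. -/
noncomputable def condProb {Ω : Type*} [MeasurableSpace Ω] (P : Measure Ω)
    (A B : Set Ω) : ℝ :=
  (P (B ∩ A)).toReal / (P A).toReal

/-- Generalized inverse valued in `EReal`, with the convention `inf ∅ = +∞`
(and `inf S = -∞` when `S` is nonempty but unbounded below). -/
noncomputable def ginvE (F : ℝ → ℝ) (q : ℝ) : EReal :=
  sInf {z : EReal | ∃ x : ℝ, z = (x : EReal) ∧ q ≤ F x}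

/-- Conditional CDF extended to `EReal` arguments, with the conventions
`F_{X|A}(+∞) = 1` and `F_{X|A}(-∞) = 0`. -/
noncomputable def cCDFE {Ω : Type*} [MeasurableSpace Ω] (P : Measure Ω) (A : Set Ω)
    (X : Ω → ℝ) (y : EReal) : ℝ :=
  if y = ⊤ then 1 else if y = ⊥ then 0 else cCDF P A X y.toReal

/-- A measure on ℝ with continuous CDF has no atoms. -/
lemma cicAux_singleton_zero (ν : Measure ℝ) [IsProbabilityMeasure ν]
    (h : Continuous fun t : ℝ => (ν (Set.Iic t)).toReal) (t : ℝ) : ν {t} = 0 := by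
  set F := fun t : ℝ => (ν (Set.Iic t)).toReal with hF
  have ha : Filter.Tendsto (fun n : ℕ => t - 1/((n:ℝ)+1)) Filter.atTop (nhds t) := by
    have h1 : Filter.Tendsto (fun n : ℕ => 1/((n:ℝ)+1)) Filter.atTop (nhds 0) :=
      tendsto_one_div_add_atTop_nhds_zero_nat
    simpa using Filter.Tendsto.const_sub t h1
  have hFa : Filter.Tendsto (fun n : ℕ => F (t - 1/((n:ℝ)+1))) Filter.atTop (nhds (F t)) :=
    (h.tendsto t).comp ha
  have hbound : ∀ n : ℕ, (ν {t}).toReal ≤ F t - F (t - 1/((n:ℝ)+1)) := by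
    intro n
    have hpos : (0:ℝ) < 1/((n:ℝ)+1) := by positivity
    have hat : t - 1/((n:ℝ)+1) < t := by linarith
    have hdisj : Disjoint (Set.Iic (t - 1/((n:ℝ)+1))) {t} := by
      rw [Set.disjoint_singleton_right]
      simpa using hat.not_ge
    have hunion : Set.Iic (t - 1/((n:ℝ)+1)) ∪ {t} ⊆ Set.Iic t := by
      intro u hu
      rcases hu with hu | hu
      · exact le_trans hu hat.le
      · simp only [Set.mem_singleton_iff] at hu
        simp [hu]
    have hm := measure_union (μ := ν) hdisj (measurableSet_singleton t)
    have hle : ν (Set.Iic (t - 1/((n:ℝ)+1))) + ν {t} ≤ ν (Set.Iic t) := by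
      rw [← hm]; exact measure_mono hunion
    have h2 : (ν (Set.Iic (t - 1/((n:ℝ)+1)))).toReal + (ν {t}).toReal
        ≤ (ν (Set.Iic t)).toReal := by
      rw [← ENNReal.toReal_add (measure_ne_top _ _) (measure_ne_top _ _)]
      exact ENNReal.toReal_mono (measure_ne_top _ _) hle
    simp only [hF]
    linarith
  have hlim : Filter.Tendsto (fun n : ℕ => F t - F (t - 1/((n:ℝ)+1)))
      Filter.atTop (nhds 0) := by
    have := (tendsto_const_nhds (x := F t) (f := Filter.atTop (α := ℕ))).sub hFa
    simpa using this
  have h0 : (ν {t}).toReal ≤ 0 := ge_of_tendsto hlim (Filter.Eventually.of_forall hbound)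
  have h0' : (ν {t}).toReal = 0 := le_antisymm h0 ENNReal.toReal_nonneg
  exact ((ENNReal.toReal_eq_zero_iff _).mp h0').resolve_right (measure_ne_top _ _)

/-- Key comparison lemma for lower sets. -/
lemma cicAux_key (ν₀ ν₁ : Measure ℝ) [IsProbabilityMeasure ν₀] [IsProbabilityMeasure ν₁]
    (h₀ : StrictMono fun t : ℝ => (ν₀ (Set.Iic t)).toReal)
    (h₁ : Continuous fun t : ℝ => (ν₁ (Set.Iic t)).toReal)
    {T S : Set ℝ} (hT : IsLowerSet T) (hS : IsLowerSet S)
    (h : ν₀ T ≤ ν₀ S) : ν₁ T ≤ ν₁ S := by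
  by_cases hsub : T ⊆ S
  · exact measure_mono hsub
  rw [Set.not_subset] at hsub
  obtain ⟨t, htT, htS⟩ := hsub
  have hSsub : S ⊆ Set.Iio t := fun s hs => lt_of_not_ge fun hle => htS (hS hle hs)
  have hTsup : Set.Iic t ⊆ T := fun u hu => hT hu htT
  have hmono0 : ∀ {a b : ℝ}, a < b → ν₀ (Set.Iic a) < ν₀ (Set.Iic b) := by
    intro a b hab
    exact (ENNReal.toReal_lt_toReal (measure_ne_top _ _) (measure_ne_top _ _)).mp (h₀ hab)
  have e1 : ν₀ (Set.Iic t) ≤ ν₀ T := measure_mono hTsup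
  have e2 : ν₀ S ≤ ν₀ (Set.Iio t) := measure_mono hSsub
  have e3 : ν₀ (Set.Iio t) ≤ ν₀ (Set.Iic t) := measure_mono Set.Iio_subset_Iic_self
  have eqT : ν₀ T = ν₀ (Set.Iic t) := le_antisymm (h.trans (e2.trans e3)) e1
  have eqS : ν₀ (Set.Iio t) = ν₀ S :=
    le_antisymm (e3.trans (e1.trans (eqT.symm ▸ h))) e2
  have hTIic : T ⊆ Set.Iic t := by
    intro t' ht'
    by_contra hgt
    rw [Set.mem_Iic, not_le] at hgt
    have hsub2 : Set.Iic t' ⊆ T := fun u hu => hT hu ht'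
    have : ν₀ (Set.Iic t') ≤ ν₀ (Set.Iic t) := eqT ▸ measure_mono hsub2
    exact absurd (lt_of_lt_of_le (hmono0 hgt) this) (lt_irrefl _)
  have hIioS : Set.Iio t ⊆ S := by
    intro s' hs'
    by_contra hns
    have hS' : S ⊆ Set.Iio s' := fun s hs => lt_of_not_ge fun hle => hns (hS hle hs)
    have hm1 : s' < (s' + t)/2 := by rw [Set.mem_Iio] at hs'; linarith
    have hm2 : (s' + t)/2 < t := by rw [Set.mem_Iio] at hs'; linarith
    have c1 : ν₀ S ≤ ν₀ (Set.Iic s') :=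
      measure_mono (hS'.trans Set.Iio_subset_Iic_self)
    have c2 : ν₀ (Set.Iic ((s' + t)/2)) ≤ ν₀ (Set.Iio t) :=
      measure_mono fun u hu => lt_of_le_of_lt hu hm2
    have c3 : ν₀ (Set.Iio t) ≤ ν₀ S := eqS.le
    exact absurd (lt_of_le_of_lt c1 (lt_of_lt_of_le (hmono0 hm1) (c2.trans c3)))
      (lt_irrefl _)
  have hst : ν₁ {t} = 0 := cicAux_singleton_zero ν₁ h₁ t
  calc ν₁ T ≤ ν₁ (Set.Iic t) := measure_mono hTIic
    _ = ν₁ (Set.Iio t ∪ {t}) := by rw [Set.Iio_union_right]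
    _ ≤ ν₁ (Set.Iio t) + ν₁ {t} := measure_union_le _ _
    _ = ν₁ (Set.Iio t) := by rw [hst, add_zero]
    _ ≤ ν₁ S := measure_mono hIioS
lemma cicAux_master (ν₀ ν₁ : Measure ℝ) [IsProbabilityMeasure ν₀] [IsProbabilityMeasure ν₁]
    (h₀ : StrictMono fun t : ℝ => (ν₀ (Set.Iic t)).toReal)
    (h₁ : Continuous fun t : ℝ => (ν₁ (Set.Iic t)).toReal)
    (μ00 : ℝ → ℝ) (hμ00 : Monotone μ00)
    (T : Set ℝ) (hT : IsLowerSet T)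
    (H₀ : ℝ → ℝ) (hH₀ : ∀ x, H₀ x = (ν₀ (μ00 ⁻¹' Set.Iic x)).toReal) :
    (ν₁ T).toReal ≤
      if ginvE H₀ ((ν₀ T).toReal) = ⊤ then 1
      else if ginvE H₀ ((ν₀ T).toReal) = ⊥ then 0
      else (ν₁ (μ00 ⁻¹' Set.Iic (ginvE H₀ ((ν₀ T).toReal)).toReal)).toReal := by
  set q := (ν₀ T).toReal with hqdef
  set z := ginvE H₀ q with hzdef
  have hzinf : z = sInf {w : EReal | ∃ x : ℝ, w = (x : EReal) ∧ q ≤ H₀ x} := rfl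
  have hSmeas : ∀ x : ℝ, MeasurableSet (μ00 ⁻¹' Set.Iic x) :=
    fun x => hμ00.measurable measurableSet_Iic
  have keystep : ∀ x : ℝ, q ≤ H₀ x → ν₁ T ≤ ν₁ (μ00 ⁻¹' Set.Iic x) := by
    intro x hx
    have hSl : IsLowerSet (μ00 ⁻¹' Set.Iic x) := fun a b hba ha => (hμ00 hba).trans ha
    have h0le : ν₀ T ≤ ν₀ (μ00 ⁻¹' Set.Iic x) := by
      rw [hH₀ x] at hx
      exact (ENNReal.toReal_le_toReal (measure_ne_top _ _) (measure_ne_top _ _)).mp hx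
    exact cicAux_key ν₀ ν₁ h₀ h₁ hT hSl h0le
  split_ifs with h1 h2
  · calc (ν₁ T).toReal ≤ (ν₁ Set.univ).toReal :=
        ENNReal.toReal_mono (measure_ne_top _ _) (measure_mono (Set.subset_univ T))
      _ = 1 := by simp
  · -- z = ⊥
    have hb : ∀ n : ℕ, ν₁ T ≤ ν₁ (μ00 ⁻¹' Set.Iic (-(n:ℝ))) := by
      intro n
      have hlt : sInf {w : EReal | ∃ x : ℝ, w = (x : EReal) ∧ q ≤ H₀ x}
          < ((-(n:ℝ) : ℝ) : EReal) := by
        rw [← hzinf, h2]; exact bot_lt_iff_ne_bot.mpr (EReal.coe_ne_bot _)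
      obtain ⟨w, hwZ, hw⟩ := sInf_lt_iff.mp hlt
      obtain ⟨x, rfl, hxq⟩ := hwZ
      have hxle : x ≤ -(n:ℝ) := le_of_lt (EReal.coe_lt_coe_iff.mp hw)
      exact (keystep x hxq).trans (measure_mono fun u hu => le_trans hu hxle)
    have hempty : ⋂ n : ℕ, μ00 ⁻¹' Set.Iic (-(n:ℝ)) = ∅ := by
      ext u
      simp only [Set.mem_iInter, Set.mem_preimage, Set.mem_Iic,
        Set.mem_empty_iff_false, iff_false, not_forall, not_le]
      obtain ⟨n, hn⟩ := exists_nat_gt (-(μ00 u))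
      exact ⟨n, by linarith⟩
    have hanti : Antitone fun n : ℕ => μ00 ⁻¹' Set.Iic (-(n:ℝ)) := by
      intro a b hab u hu
      simp only [Set.mem_preimage, Set.mem_Iic] at hu ⊢
      have hab' : (a:ℝ) ≤ (b:ℝ) := by exact_mod_cast hab
      linarith
    have htend := tendsto_measure_iInter_atTop (μ := ν₁)
      (fun n => (hSmeas _).nullMeasurableSet) hanti ⟨0, measure_ne_top _ _⟩
    rw [hempty] at htend
    have hle0 : ν₁ T ≤ ν₁ (∅ : Set ℝ) :=
      ge_of_tendsto htend (Filter.Eventually.of_forall hb)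
    simp only [measure_empty, le_zero_iff] at hle0
    simp [hle0]
  · -- z real
    set r := z.toReal with hrdef
    have hzr : z = (r : EReal) := (EReal.coe_toReal h1 h2).symm
    have hb : ∀ n : ℕ, ν₁ T ≤ ν₁ (μ00 ⁻¹' Set.Iic (r + 1/((n:ℝ)+1))) := by
      intro n
      have hrlt : r < r + 1/((n:ℝ)+1) := by
        have : (0:ℝ) < 1/((n:ℝ)+1) := by positivity
        linarith
      have hlt : sInf {w : EReal | ∃ x : ℝ, w = (x : EReal) ∧ q ≤ H₀ x}
          < ((r + 1/((n:ℝ)+1) : ℝ) : EReal) := by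
        rw [← hzinf, hzr]; exact_mod_cast hrlt
      obtain ⟨w, hwZ, hw⟩ := sInf_lt_iff.mp hlt
      obtain ⟨x, rfl, hxq⟩ := hwZ
      have hxle : x ≤ r + 1/((n:ℝ)+1) := le_of_lt (EReal.coe_lt_coe_iff.mp hw)
      exact (keystep x hxq).trans (measure_mono fun u hu => le_trans hu hxle)
    have hinter : ⋂ n : ℕ, μ00 ⁻¹' Set.Iic (r + 1/((n:ℝ)+1)) = μ00 ⁻¹' Set.Iic r := by
      ext u
      simp only [Set.mem_iInter, Set.mem_preimage, Set.mem_Iic]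
      constructor
      · intro h
        by_contra hgt
        push_neg at hgt
        obtain ⟨n, hn⟩ := exists_nat_one_div_lt (sub_pos.mpr hgt)
        have := h n
        linarith
      · intro h n
        have : (0:ℝ) < 1/((n:ℝ)+1) := by positivity
        linarith
    have hanti : Antitone fun n : ℕ => μ00 ⁻¹' Set.Iic (r + 1/((n:ℝ)+1)) := by
      intro a b hab u hu
      have hba : 1/((b:ℝ)+1) ≤ 1/((a:ℝ)+1) := by
        apply one_div_le_one_div_of_le (by positivity)
        have : (a:ℝ) ≤ (b:ℝ) := by exact_mod_cast hab
        linarith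
      simp only [Set.mem_preimage, Set.mem_Iic] at hu ⊢
      linarith
    have htend := tendsto_measure_iInter_atTop (μ := ν₁)
      (fun n => (hSmeas _).nullMeasurableSet) hanti ⟨0, measure_ne_top _ _⟩
    rw [hinter] at htend
    have hfin : ν₁ T ≤ ν₁ (μ00 ⁻¹' Set.Iic r) :=
      ge_of_tendsto htend (Filter.Eventually.of_forall hb)
    exact ENNReal.toReal_mono (measure_ne_top _ _) hfin


/-- **Remark 2 (upper bound, counterfactual untreated outcome of treatment respondents)**:
under Assumptions TI and CONT, with `μ₀₀` and `μ₁₀` only nondecreasing (weak monotonicity,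
allowing discrete outcomes), for every `y ∈ ℝ`,
`F_{Y₁(0)|G=1,R=1}(y) ≤ F_{Y₀|G=1,R=1}(F_{Y₀|G=0,R=1}⁻¹(F_{Y₁|G=0,R=1}(y)))`,
with the conventions `inf ∅ = +∞` and `F(+∞) = 1`. -/


theorem cic_remark2_upper_untreated {Ω : Type*} [MeasurableSpace Ω]
    (P : Measure Ω) [IsProbabilityMeasure P]
    (U₀ U₁ : Ω → ℝ) (G R : Ω → Bool)
    (hU₀ : Measurable U₀) (hU₁ : Measurable U₁)
    (hG : Measurable G) (hR : Measurable R)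
    (μ00 μ10 μ11 : ℝ → ℝ)
    -- observed outcomes
    (Y0 Y1 : Ω → ℝ)
    (hY0 : ∀ ω, Y0 ω = μ00 (U₀ ω))
    (hY1 : ∀ ω, Y1 ω = if G ω = true then μ11 (U₁ ω) else μ10 (U₁ ω))
    -- Assumption TI (time invariance)
    (hTI : ∀ g r : Bool, 0 < P {ω | G ω = g ∧ R ω = r} →
      (P[|{ω | G ω = g ∧ R ω = r}]).map U₀ = (P[|{ω | G ω = g ∧ R ω = r}]).map U₁)
    -- Assumption CONT
    (hCONT : ∀ g : Bool, 0 < P {ω | G ω = g ∧ R ω = true} ∧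
      Continuous (cCDF P {ω | G ω = g ∧ R ω = true} U₁) ∧
      StrictMono (cCDF P {ω | G ω = g ∧ R ω = true} U₁))
    -- weak monotonicity of μ₀₀ and μ₁₀
    (hμ00 : Monotone μ00) (hμ10 : Monotone μ10)
    (y : ℝ) :
    cCDF P {ω | G ω = true ∧ R ω = true} (fun ω => μ10 (U₁ ω)) y
      ≤ cCDFE P {ω | G ω = true ∧ R ω = true} Y0
          (ginvE (cCDF P {ω | G ω = false ∧ R ω = true} Y0)
            (cCDF P {ω | G ω = false ∧ R ω = true} Y1 y)) := by
  have mA : ∀ g : Bool, MeasurableSet {ω | G ω = g ∧ R ω = true} :=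
    fun g => (hG (measurableSet_singleton g)).inter (hR (measurableSet_singleton true))
  haveI i1 : IsProbabilityMeasure (P[|{ω | G ω = true ∧ R ω = true}]) :=
    cond_isProbabilityMeasure (hCONT true).1.ne'
  haveI i0 : IsProbabilityMeasure (P[|{ω | G ω = false ∧ R ω = true}]) :=
    cond_isProbabilityMeasure (hCONT false).1.ne'
  haveI : IsProbabilityMeasure ((P[|{ω | G ω = true ∧ R ω = true}]).map U₁) :=
    Measure.isProbabilityMeasure_map hU₁.aemeasurable
  haveI : IsProbabilityMeasure ((P[|{ω | G ω = false ∧ R ω = true}]).map U₁) :=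
    Measure.isProbabilityMeasure_map hU₁.aemeasurable
  have hcdfU : ∀ g : Bool, ∀ t : ℝ, cCDF P {ω | G ω = g ∧ R ω = true} U₁ t
      = (((P[|{ω | G ω = g ∧ R ω = true}]).map U₁) (Set.Iic t)).toReal := by
    intro g t
    unfold cCDF
    rw [Measure.map_apply hU₁ measurableSet_Iic]
    rfl
  have h₀strict : StrictMono (fun t : ℝ =>
      (((P[|{ω | G ω = false ∧ R ω = true}]).map U₁) (Set.Iic t)).toReal) := by
    intro a b hab
    have h := (hCONT false).2.2 hab
    rwa [hcdfU false a, hcdfU false b] at h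
  have h₁cont : Continuous (fun t : ℝ =>
      (((P[|{ω | G ω = true ∧ R ω = true}]).map U₁) (Set.Iic t)).toReal) := by
    have h := (hCONT true).2.1
    have he : cCDF P {ω | G ω = true ∧ R ω = true} U₁
        = fun t : ℝ => (((P[|{ω | G ω = true ∧ R ω = true}]).map U₁) (Set.Iic t)).toReal :=
      funext fun t => hcdfU true t
    rwa [he] at h
  have hLHS : cCDF P {ω | G ω = true ∧ R ω = true} (fun ω => μ10 (U₁ ω)) y
      = (((P[|{ω | G ω = true ∧ R ω = true}]).map U₁) (μ10 ⁻¹' Set.Iic y)).toReal := by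
    unfold cCDF
    rw [Measure.map_apply hU₁ (hμ10.measurable measurableSet_Iic)]
    rfl
  have hq : cCDF P {ω | G ω = false ∧ R ω = true} Y1 y
      = (((P[|{ω | G ω = false ∧ R ω = true}]).map U₁) (μ10 ⁻¹' Set.Iic y)).toReal := by
    unfold cCDF
    rw [Measure.map_apply hU₁ (hμ10.measurable measurableSet_Iic),
      cond_apply (mA false) P, cond_apply (mA false) P]
    have hset : {ω | G ω = false ∧ R ω = true} ∩ {ω | Y1 ω ≤ y}
        = {ω | G ω = false ∧ R ω = true} ∩ U₁ ⁻¹' (μ10 ⁻¹' Set.Iic y) := by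
      ext ω
      simp only [Set.mem_inter_iff, Set.mem_setOf_eq, Set.mem_preimage, Set.mem_Iic]
      constructor
      · rintro ⟨⟨hGω, hRω⟩, h2⟩
        refine ⟨⟨hGω, hRω⟩, ?_⟩
        rw [hY1 ω, hGω] at h2
        simpa using h2
      · rintro ⟨⟨hGω, hRω⟩, h2⟩
        refine ⟨⟨hGω, hRω⟩, ?_⟩
        rw [hY1 ω, hGω]
        simpa using h2
    rw [hset]
  have hH : ∀ g : Bool, ∀ x : ℝ, cCDF P {ω | G ω = g ∧ R ω = true} Y0 x
      = (((P[|{ω | G ω = g ∧ R ω = true}]).map U₁) (μ00 ⁻¹' Set.Iic x)).toReal := by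
    intro g x
    unfold cCDF
    rw [← hTI g true (hCONT g).1,
      Measure.map_apply hU₀ (hμ00.measurable measurableSet_Iic)]
    have hset : {ω | Y0 ω ≤ x} = U₀ ⁻¹' (μ00 ⁻¹' Set.Iic x) := by
      ext ω
      simp [hY0 ω]
    rw [hset]
  rw [hLHS, hq]
  unfold cCDFE
  rw [hH true]
  exact cicAux_master _ _ h₀strict h₁cont μ00 hμ00 (μ10 ⁻¹' Set.Iic y)
    (fun a b hba ha => (hμ10 hba).trans ha)
    (cCDF P {ω | G ω = false ∧ R ω = true} Y0) (hH false)
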